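/- The Mahler volume product for isocanted cubes satisfies (ℓ-a)^{d-1}(ℓ+(d-1)a) · (2^{d+1}/(ℓ^d d!)) · Σ_{j=0}^{d-1} C(d+j-1, j)·(ℓ/(2(ℓ-a)))^j ≥ 4^d/d! for all 0 < a < ℓ and d ≥ 2. -/

import Mathlib

open Finset

namespace MahlerIso

lemma choose_step (n j : ℕ) (h : j + 1 ≤ n) :
    2 * (n + j).choose j ≤ (n + j + 1).choose (j + 1) := by
  have h1 : (n + j).choose (j + 1) * (j + 1) = (n + j).choose j * n := by
    have h0 := Nat.choose_succ_right_eq (n + j) j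
    rwa [Nat.add_sub_cancel] at h0
  have h2 : (n + j).choose j ≤ (n + j).choose (j + 1) := by
    have hm : (n + j).choose j * (j + 1) ≤ (n + j).choose (j + 1) * (j + 1) := by
      calc (n + j).choose j * (j + 1) ≤ (n + j).choose j * n := Nat.mul_le_mul_left _ h
        _ = (n + j).choose (j + 1) * (j + 1) := h1.symm
    exact Nat.le_of_mul_le_mul_right hm (Nat.succ_pos j)
  have h3 : (n + j + 1).choose (j + 1) = (n + j).choose j + (n + j).choose (j + 1) :=
    Nat.choose_succ_succ (n + j) j
  omega

lemma pow_mul_choose_le (n m j : ℕ) (hmj : m ≤ j) (hjn : j ≤ n) :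
    2 ^ (j - m) * (n + m).choose m ≤ (n + j).choose j := by
  induction j, hmj using Nat.le_induction with
  | base => simp
  | succ j hmj ih =>
    have hjn' : j ≤ n := by omega
    have h1 : j + 1 - m = (j - m) + 1 := by omega
    calc 2 ^ (j + 1 - m) * (n + m).choose m
        = 2 * (2 ^ (j - m) * (n + m).choose m) := by rw [h1, pow_succ]; ring
      _ ≤ 2 * (n + j).choose j := Nat.mul_le_mul_left 2 (ih hjn')
      _ ≤ (n + j + 1).choose (j + 1) := choose_step n j hjn

def S (n j : ℕ) : ℕ := ∑ m ∈ range (j + 1), 2 ^ (j - m) * (n + m).choose m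

lemma S_zero (n : ℕ) : S n 0 = 1 := by simp [S]

lemma S_succ (n j : ℕ) : S n (j + 1) = 2 * S n j + (n + (j + 1)).choose (j + 1) := by
  unfold S
  rw [Finset.sum_range_succ]
  congr 1
  · rw [Finset.mul_sum]
    refine Finset.sum_congr rfl fun m hm => ?_
    have hm' : m ≤ j := Nat.lt_succ_iff.mp (Finset.mem_range.mp hm)
    have h : j + 1 - m = (j - m) + 1 := by omega
    rw [h, pow_succ]
    ring
  · simp

lemma S_le (n j : ℕ) (hjn : j ≤ n) : S n j ≤ (n + 1) * (n + j).choose j := by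
  calc S n j ≤ ∑ _m ∈ range (j + 1), (n + j).choose j := by
        refine Finset.sum_le_sum fun m hm => ?_
        exact pow_mul_choose_le n m j (Nat.lt_succ_iff.mp (Finset.mem_range.mp hm)) hjn
    _ = (j + 1) * (n + j).choose j := by rw [Finset.sum_const, card_range, smul_eq_mul]
    _ ≤ (n + 1) * (n + j).choose j := Nat.mul_le_mul_right _ (by omega)

lemma partial_sum_id (n : ℕ) :
    ∑ j ∈ range (n + 1), ((n + j).choose j : ℝ) * ((1:ℝ)/2) ^ j = 2 ^ n := by
  induction n with
  | zero => simp
  | succ n ih =>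
    have hsymm : (2 * n + 1).choose n = (2 * n + 1).choose (n + 1) := by
      have h := Nat.choose_symm (n := 2 * n + 1) (k := n + 1) (by omega)
      rw [show 2 * n + 1 - (n + 1) = n from by omega] at h
      omega
    have hcb : (2 * n + 2).choose (n + 1) = 2 * (2 * n + 1).choose (n + 1) := by
      have h3 : (2 * n + 2).choose (n + 1) = (2 * n + 1).choose n + (2 * n + 1).choose (n + 1) :=
        Nat.choose_succ_succ (2 * n + 1) n
      omega
    set f : ℕ → ℝ := fun j => ((n + 1 + j).choose j : ℝ) * ((1:ℝ)/2) ^ j with hf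
    set X := ∑ j ∈ range (n + 2), f j with hX
    have hfn1 : f (n + 1) = ((2 * n + 2).choose (n + 1) : ℝ) * ((1:ℝ)/2) ^ (n + 1) := by
      simp only [hf, show n + 1 + (n + 1) = 2 * n + 2 from by omega]
    have hXsplit : X = ∑ j ∈ range (n + 1), f j + f (n + 1) := by
      rw [hX]; exact Finset.sum_range_succ f (n + 1)
    have eqB : ∑ j ∈ range (n + 1), f j
        = X - ((2 * n + 2).choose (n + 1) : ℝ) * ((1:ℝ)/2) ^ (n + 1) := by
      rw [hXsplit, hfn1]; ring
    have eqA : X = 1 + (∑ j ∈ range (n + 1), ((n + 1 + j).choose j : ℝ) * ((1:ℝ)/2) ^ (j + 1)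
        + ∑ j ∈ range (n + 1), ((n + 1 + j).choose (j + 1) : ℝ) * ((1:ℝ)/2) ^ (j + 1)) := by
      rw [hX, Finset.sum_range_succ']
      have h0 : f 0 = 1 := by simp [hf]
      have hterm : ∀ j ∈ range (n + 1), f (j + 1)
          = ((n + 1 + j).choose j : ℝ) * ((1:ℝ)/2) ^ (j + 1)
            + ((n + 1 + j).choose (j + 1) : ℝ) * ((1:ℝ)/2) ^ (j + 1) := by
        intro j hj
        have hp : (n + 1 + (j + 1)).choose (j + 1)
            = (n + 1 + j).choose j + (n + 1 + j).choose (j + 1) := by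
          have h := Nat.choose_succ_succ (n + 1 + j) j
          rwa [show n + 1 + (j + 1) = n + 1 + j + 1 from by omega]
        simp only [hf, hp]
        push_cast
        ring
      rw [Finset.sum_congr rfl hterm, h0, Finset.sum_add_distrib]
      ring
    have eqB2 : ∑ j ∈ range (n + 1), ((n + 1 + j).choose j : ℝ) * ((1:ℝ)/2) ^ (j + 1)
        = (1/2) * (X - ((2 * n + 2).choose (n + 1) : ℝ) * ((1:ℝ)/2) ^ (n + 1)) := by
      rw [← eqB, Finset.mul_sum]
      refine Finset.sum_congr rfl fun j _ => ?_
      simp only [hf]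
      ring
    have eqC : ∑ j ∈ range (n + 1), ((n + 1 + j).choose (j + 1) : ℝ) * ((1:ℝ)/2) ^ (j + 1)
        = 2 ^ n + ((2 * n + 1).choose (n + 1) : ℝ) * ((1:ℝ)/2) ^ (n + 1) - 1 := by
      have h1 : ∑ j ∈ range (n + 2), ((n + j).choose j : ℝ) * ((1:ℝ)/2) ^ j
          = ∑ j ∈ range (n + 1), ((n + (j + 1)).choose (j + 1) : ℝ) * ((1:ℝ)/2) ^ (j + 1) + 1 := by
        rw [Finset.sum_range_succ']; simp
      have h2 : ∑ j ∈ range (n + 2), ((n + j).choose j : ℝ) * ((1:ℝ)/2) ^ j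
          = 2 ^ n + ((2 * n + 1).choose (n + 1) : ℝ) * ((1:ℝ)/2) ^ (n + 1) := by
        rw [Finset.sum_range_succ, ih, show n + (n + 1) = 2 * n + 1 from by omega]
      have h3 : ∑ j ∈ range (n + 1), ((n + 1 + j).choose (j + 1) : ℝ) * ((1:ℝ)/2) ^ (j + 1)
          = ∑ j ∈ range (n + 1), ((n + (j + 1)).choose (j + 1) : ℝ) * ((1:ℝ)/2) ^ (j + 1) := by
        refine Finset.sum_congr rfl fun j _ => ?_
        rw [show n + 1 + j = n + (j + 1) from by omega]
      rw [h3]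
      linarith [h1, h2]
    have hcbR : ((2 * n + 2).choose (n + 1) : ℝ) = 2 * ((2 * n + 1).choose (n + 1) : ℝ) := by
      exact_mod_cast hcb
    rw [hcbR] at eqB2
    have hpow : (2:ℝ) ^ (n + 1) = 2 * 2 ^ n := by ring
    show X = 2 ^ (n + 1)
    rw [hpow]
    linarith [eqA, eqB2, eqC]

lemma S_cast (n : ℕ) : (S n n : ℝ) = 4 ^ n := by
  have key : ∀ m ∈ range (n + 1), ((2 ^ (n - m) * (n + m).choose m : ℕ) : ℝ)
      = 2 ^ n * (((n + m).choose m : ℝ) * ((1:ℝ)/2) ^ m) := by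
    intro m hm
    have hmn : m ≤ n := Nat.lt_succ_iff.mp (Finset.mem_range.mp hm)
    have h2 : (2:ℝ) ^ (n - m) * 2 ^ m = 2 ^ n := by
      rw [← pow_add]; congr 1; omega
    push_cast
    have hinv : (2:ℝ) ^ m * ((1:ℝ)/2) ^ m = 1 := by rw [← mul_pow]; norm_num
    field_simp
    linear_combination (((n + m).choose m : ℝ) * ((1:ℝ)/2) ^ m) * h2 - ((n + m).choose m : ℝ) * 2 ^ (n - m) * hinv
  unfold S
  rw [Nat.cast_sum, Finset.sum_congr rfl key, ← Finset.mul_sum, partial_sum_id]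
  rw [← mul_pow]
  norm_num

lemma main_ineq (n : ℕ) (t u : ℝ) (ht : 0 < t) (hu : 0 < u) (hut : u < 2 * t) :
    2 * 4 ^ n * t ^ (n + 1) ≤
      (2 * ((n : ℝ) + 1) * t - (n : ℝ) * u) *
        ∑ j ∈ range (n + 1), ((n + j).choose j : ℝ) * t ^ j * u ^ (n - j) := by
  set p : ℕ → ℝ := fun j => 2 * (S n j : ℝ) * u ^ (n - j) * t ^ (j + 1) with hp
  set q : ℕ → ℝ := fun j => if j = 0 then 0 else p (j - 1) with hq
  have tele : ∑ j ∈ range (n + 1), q j = ∑ j ∈ range n, p j := by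
    rw [Finset.sum_range_succ']
    simp [hq]
  have expand : ∀ j ∈ range (n + 1),
      (2 * ((n : ℝ) + 1) * t - (n : ℝ) * u) * (((n + j).choose j : ℝ) * t ^ j * u ^ (n - j))
        = (((n : ℝ) + 1) * ((n + j).choose j : ℝ) - (S n j : ℝ)) * (t ^ j * u ^ (n - j)) * (2 * t - u)
          + (p j - q j) := by
    intro j hj
    cases j with
    | zero =>
      simp only [hp, hq, S_zero, Nat.sub_zero, pow_zero, Nat.add_zero, Nat.choose_zero_right,
        Nat.cast_one, if_pos rfl]
      ring
    | succ j =>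
      have hq1 : q (j + 1) = p j := by simp [hq]
      have hrec : (S n (j + 1) : ℝ) = 2 * (S n j : ℝ) + ((n + (j + 1)).choose (j + 1) : ℝ) := by
        rw [S_succ]; push_cast; ring
      have hsub : n - j = (n - (j + 1)) + 1 := by
        have := Finset.mem_range.mp hj
        omega
      rw [hq1]
      simp only [hp]
      rw [hrec]
      simp only [hsub, pow_succ]
      ring
  have key : (2 * ((n : ℝ) + 1) * t - (n : ℝ) * u) *
      ∑ j ∈ range (n + 1), ((n + j).choose j : ℝ) * t ^ j * u ^ (n - j)
      = (∑ j ∈ range (n + 1),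
          (((n : ℝ) + 1) * ((n + j).choose j : ℝ) - (S n j : ℝ)) * (t ^ j * u ^ (n - j)) * (2 * t - u))
        + p n := by
    rw [Finset.mul_sum, Finset.sum_congr rfl expand, Finset.sum_add_distrib,
      Finset.sum_sub_distrib, tele, Finset.sum_range_succ p n]
    ring
  rw [key]
  have hpn : p n = 2 * 4 ^ n * t ^ (n + 1) := by
    simp only [hp, S_cast, Nat.sub_self, pow_zero]
    ring
  have hsum_nonneg : 0 ≤ ∑ j ∈ range (n + 1),
      (((n : ℝ) + 1) * ((n + j).choose j : ℝ) - (S n j : ℝ)) * (t ^ j * u ^ (n - j)) * (2 * t - u) := by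
    refine Finset.sum_nonneg fun j hj => ?_
    have hjn : j ≤ n := Nat.lt_succ_iff.mp (Finset.mem_range.mp hj)
    have hG : (0:ℝ) ≤ ((n : ℝ) + 1) * ((n + j).choose j : ℝ) - (S n j : ℝ) := by
      have h := S_le n j hjn
      have h' : (S n j : ℝ) ≤ (((n + 1) * (n + j).choose j : ℕ) : ℝ) := by exact_mod_cast h
      push_cast at h'
      linarith
    have hpow : (0:ℝ) ≤ t ^ j * u ^ (n - j) := by positivity
    have h2t : (0:ℝ) ≤ 2 * t - u := by linarith
    exact mul_nonneg (mul_nonneg hG hpow) h2t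
  linarith [hsum_nonneg, hpn.ge, hpn.le]

end MahlerIso

open Finset MahlerIso in
theorem mahler_for_isocanted (d : ℕ) (hd : 2 ≤ d) (ℓ a : ℝ) (ha : 0 < a) (haℓ : a < ℓ) :
    (ℓ - a) ^ (d - 1) * (ℓ + ((d : ℝ) - 1) * a) *
        (2 ^ (d + 1) / (ℓ ^ d * (Nat.factorial d))) *
        ∑ j ∈ Finset.range d,
          (Nat.choose (d + j - 1) j : ℝ) * (ℓ / (2 * (ℓ - a))) ^ j ≥
      4 ^ d / (Nat.factorial d) := by
  obtain ⟨n, rfl⟩ : ∃ n, d = n + 1 := ⟨d - 1, by omega⟩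
  have hℓ : 0 < ℓ := ha.trans haℓ
  have hla : 0 < ℓ - a := by linarith
  have hF : (0:ℝ) < (Nat.factorial (n + 1) : ℝ) := by
    exact_mod_cast Nat.factorial_pos (n + 1)
  have harg : ∀ j : ℕ, n + 1 + j - 1 = n + j := fun j => by omega
  have hcast : ((n + 1 : ℕ) : ℝ) - 1 = (n : ℝ) := by push_cast; ring
  simp only [harg, Nat.add_sub_cancel, hcast]
  have main := main_ineq n ℓ (2 * (ℓ - a)) hℓ (by linarith) (by linarith)
  set Sig1 : ℝ := ∑ j ∈ Finset.range (n + 1), ((Nat.choose (n + j) j : ℝ)) * (ℓ / (2 * (ℓ - a))) ^ j with hSig1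
  set Sig2 : ℝ := ∑ j ∈ Finset.range (n + 1), ((Nat.choose (n + j) j : ℝ)) * ℓ ^ j * (2 * (ℓ - a)) ^ (n - j) with hSig2
  have h1 : (ℓ - a) ^ n * Sig1 = ((1:ℝ)/2) ^ n * Sig2 := by
    rw [hSig1, hSig2, Finset.mul_sum, Finset.mul_sum]
    refine Finset.sum_congr rfl fun j hj => ?_
    have hjn : j ≤ n := Nat.lt_succ_iff.mp (Finset.mem_range.mp hj)
    have hsplit : (ℓ - a) ^ n = (ℓ - a) ^ j * (ℓ - a) ^ (n - j) := by
      rw [← pow_add]; congr 1; omega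
    have h2n : ((1:ℝ)/2) ^ n = ((1:ℝ)/2) ^ j * ((1:ℝ)/2) ^ (n - j) := by
      rw [← pow_add]; congr 1; omega
    rw [hsplit, h2n, div_pow, mul_pow]
    rw [mul_pow (2:ℝ) (ℓ - a) (n - j)]
    have e1 : ((1:ℝ)/2) ^ j * 2 ^ j = 1 := by rw [← mul_pow]; norm_num
    have e2 : ((1:ℝ)/2) ^ (n - j) * 2 ^ (n - j) = 1 := by rw [← mul_pow]; norm_num
    field_simp
    linear_combination (-((n + j).choose j : ℝ) * (((1:ℝ)/2) ^ (n - j) * 2 ^ (n - j))) * e1 - ((n + j).choose j : ℝ) * e2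
  rw [ge_iff_le, ← sub_nonneg]
  have expand : (ℓ - a) ^ n * (ℓ + (n : ℝ) * a) *
        (2 ^ (n + 1 + 1) / (ℓ ^ (n + 1) * (Nat.factorial (n + 1) : ℝ))) * Sig1
        - 4 ^ (n + 1) / (Nat.factorial (n + 1) : ℝ)
      = ((2 * ((n : ℝ) + 1) * ℓ - (n : ℝ) * (2 * (ℓ - a))) * Sig2 - 2 * 4 ^ n * ℓ ^ (n + 1))
          * (2 / (ℓ ^ (n + 1) * (Nat.factorial (n + 1) : ℝ))) := by
    have hre : (ℓ - a) ^ n * (ℓ + (n : ℝ) * a) *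
          (2 ^ (n + 1 + 1) / (ℓ ^ (n + 1) * (Nat.factorial (n + 1) : ℝ))) * Sig1
        = ((ℓ - a) ^ n * Sig1) * ((ℓ + (n : ℝ) * a) *
            (2 ^ (n + 1 + 1) / (ℓ ^ (n + 1) * (Nat.factorial (n + 1) : ℝ)))) := by ring
    rw [hre, h1]
    have h2n : ((1:ℝ)/2) ^ n = ((2:ℝ) ^ n)⁻¹ := by rw [one_div, inv_pow]
    rw [h2n]
    have h2 : (2:ℝ) ^ n ≠ 0 := by positivity
    field_simp
    ring
  rw [expand]
  have hnn : (0:ℝ) ≤ (2 * ((n : ℝ) + 1) * ℓ - (n : ℝ) * (2 * (ℓ - a))) * Sig2 - 2 * 4 ^ n * ℓ ^ (n + 1) := by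
    linarith [main]
  have hpos : (0:ℝ) ≤ 2 / (ℓ ^ (n + 1) * (Nat.factorial (n + 1) : ℝ)) := by positivity
  exact mul_nonneg hnn hpos
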